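/- For every odd positive integer m, ζ(2m+1) + 2 Σ_{n=1}^∞ n^{-2m-1}/(e^{2πn} - 1) = π^{2m+1} 2^{2m} Σ_{j=0}^{m+1} (-1)^{j+1} B_{2j} B_{2m+2-2j} / ((2j)! (2m+2-2j)!). -/

import Mathlib

set_option maxHeartbeats 1000000
open Complex Real

noncomputable section
namespace Lerch

lemma integral_exp_aux (c d : ℂ) (hc : c ≠ 0) :
    (∫ x : ℝ in (0:ℝ)..1, Complex.exp (c * x + d)) = Complex.exp d * (Complex.exp c - 1) / c := by
  have : ∀ x : ℝ, Complex.exp (c * x + d) = Complex.exp d * Complex.exp (c * x) := by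
    intro x; rw [Complex.exp_add]; ring
  simp_rw [this]
  rw [intervalIntegral.integral_const_mul, integral_exp_mul_complex hc]
  simp [mul_div_assoc]

def cg (a : ℝ) : ℝ → ℂ := fun x =>
  Complex.exp (2*(π:ℂ)*a*(x - 1/2)) + Complex.exp (-(2*(π:ℂ)*a)*(x - 1/2))

lemma cg_cont (a : ℝ) : Continuous (cg a) := by
  unfold cg; fun_prop

lemma cg_endpoints (a : ℝ) : cg a 0 = cg a 1 := by
  simp only [cg]
  have h1 : (2*(π:ℂ)*a*(((0:ℝ):ℂ) - 1/2)) = -((π:ℂ)*a) := by push_cast; ring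
  have h2 : (-(2*(π:ℂ)*a)*(((0:ℝ):ℂ) - 1/2)) = (π:ℂ)*a := by push_cast; ring
  have h3 : (2*(π:ℂ)*a*(((1:ℝ):ℂ) - 1/2)) = (π:ℂ)*a := by push_cast; ring
  have h4 : (-(2*(π:ℂ)*a)*(((1:ℝ):ℂ) - 1/2)) = -((π:ℂ)*a) := by push_cast; ring
  rw [h1, h2, h3, h4, add_comm]

lemma cg_coeff (a : ℝ) (ha : 0 < a) (k : ℤ) :
    fourierCoeffOn (zero_lt_one' ℝ) (cg a) k
      = ((Real.exp (π*a) - Real.exp (-(π*a))) * a / (π * (a^2 + k^2)) : ℝ) := by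
  set c₁ : ℂ := 2*(π:ℂ)*a - 2*π*I*k with hc₁def
  set c₂ : ℂ := -(2*(π:ℂ)*a) - 2*π*I*k with hc₂def
  have hπ : (π:ℝ) ≠ 0 := Real.pi_ne_zero
  have hΔ : (a:ℝ)^2 + (k:ℝ)^2 ≠ 0 := by positivity
  have hΔ' : ((a:ℂ)^2 + (k:ℂ)^2) ≠ 0 := by
    intro h; apply hΔ; exact_mod_cast congrArg Complex.re h
  have hc₁ : c₁ ≠ 0 := by
    intro h
    have := congrArg Complex.re h
    simp [hc₁def, Real.pi_ne_zero, ha.ne'] at this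
  have hc₂ : c₂ ≠ 0 := by
    intro h
    have := congrArg Complex.re h
    simp [hc₂def, Real.pi_ne_zero, ha.ne'] at this
  rw [fourierCoeffOn_eq_integral]
  simp only [sub_zero, div_one, one_smul, smul_eq_mul]
  have h1 : ∀ x : ℝ, (fourier (-k) (x : AddCircle ((1:ℝ)-0)) : ℂ) * cg a x
      = Complex.exp (c₁ * x + (-((π:ℂ)*a))) + Complex.exp (c₂ * x + ((π:ℂ)*a)) := by
    intro x
    rw [fourier_coe_apply, cg, mul_add, ← Complex.exp_add, ← Complex.exp_add]
    push_cast
    rw [hc₁def, hc₂def]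
    ring_nf
  rw [intervalIntegral.integral_congr (g := fun x : ℝ =>
      Complex.exp (c₁ * x + (-((π:ℂ)*a))) + Complex.exp (c₂ * x + ((π:ℂ)*a)))
      (fun x _ => h1 x)]
  have hii : ∀ c d : ℂ, IntervalIntegrable (fun x:ℝ => Complex.exp (c*x+d))
      MeasureTheory.volume 0 1 := by
    intro c d
    apply Continuous.intervalIntegrable
    exact Complex.continuous_exp.comp (by continuity)
  rw [intervalIntegral.integral_add (hii c₁ _) (hii c₂ _)]
  rw [integral_exp_aux _ _ hc₁, integral_exp_aux _ _ hc₂]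
  have hek : Complex.exp (-(2*(π:ℂ)*I*k)) = 1 := by
    rw [Complex.exp_neg]
    have : (2*(π:ℂ)*I*k) = (k:ℤ) * (2 * π * I) := by push_cast; ring
    rw [this, Complex.exp_int_mul_two_pi_mul_I]; simp
  have he₁ : Complex.exp c₁ = Complex.exp (2*(π:ℂ)*a) := by
    rw [hc₁def, sub_eq_add_neg, Complex.exp_add, hek, mul_one]
  have he₂ : Complex.exp c₂ = Complex.exp (-(2*(π:ℂ)*a)) := by
    rw [hc₂def, sub_eq_add_neg, Complex.exp_add, hek, mul_one]
  rw [he₁, he₂]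
  set E : ℂ := Complex.exp ((π:ℂ)*a) with hE
  set F : ℂ := Complex.exp (-((π:ℂ)*a)) with hF
  have hEF : E * F = 1 := by rw [hE, hF, ← Complex.exp_add]; simp
  have h2a : Complex.exp (2*(π:ℂ)*a) = E^2 := by
    rw [hE, sq, ← Complex.exp_add]; ring_nf
  have h2b : Complex.exp (-(2*(π:ℂ)*a)) = F^2 := by
    rw [hF, sq, ← Complex.exp_add]; ring_nf
  rw [h2a, h2b]
  have e1 : F * (E^2 - 1) = E - F := by linear_combination E * hEF
  have e2 : E * (F^2 - 1) = F - E := by linear_combination F * hEF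
  rw [e1, e2, div_add_div _ _ hc₁ hc₂]
  have hcc : c₁ * c₂ = -(4*(π:ℂ)^2*((a:ℂ)^2+(k:ℂ)^2)) := by
    rw [hc₁def, hc₂def]
    linear_combination (4*(π:ℂ)^2*(k:ℂ)^2) * Complex.I_sq
  have hnum : (E - F) * c₂ + c₁ * (F - E) = (E - F) * (-(4*(π:ℂ)*a)) := by
    rw [hc₁def, hc₂def]; ring
  rw [hnum, hcc]
  push_cast
  rw [← hE, ← hF]
  have hπ' : (π:ℂ) ≠ 0 := by exact_mod_cast hπ
  field_simp

end Lerch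

namespace Lerch
open MeasureTheory

lemma summable_nat_aux (a : ℝ) (ha : 0 < a) : Summable (fun n : ℕ => a/(a^2+(n:ℝ)^2)) := by
  have hmaj : Summable (fun n : ℕ => a * (1/((n:ℝ)+1)^2)) := by
    apply Summable.mul_left
    have := (summable_nat_add_iff (f := fun n : ℕ => 1/(n:ℝ)^2) 1).2
      (Real.summable_one_div_nat_pow.2 one_lt_two)
    exact this.congr (fun n => by push_cast; ring)
  have hsh : Summable (fun n : ℕ => a/(a^2+((n:ℝ)+1)^2)) := by
    apply Summable.of_nonneg_of_le (fun n => by positivity) _ hmaj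
    intro n
    rw [div_le_iff₀ (by positivity)]
    have h1 : ((n:ℝ)+1)^2 ≤ a^2 + ((n:ℝ)+1)^2 := by nlinarith
    calc a = a * (1/((n:ℝ)+1)^2) * ((n:ℝ)+1)^2 := by field_simp
    _ ≤ a * (1/((n:ℝ)+1)^2) * (a^2 + ((n:ℝ)+1)^2) := by
        apply mul_le_mul_of_nonneg_left h1 (by positivity)
  exact (summable_nat_add_iff 1).1 (hsh.congr (fun n => by push_cast; ring))

lemma summable_int_aux (a : ℝ) (ha : 0 < a) : Summable (fun k : ℤ => a/(a^2+(k:ℝ)^2)) := by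
  apply Summable.of_nat_of_neg
  · exact (summable_nat_aux a ha).congr (fun n => by push_cast; ring)
  · exact (summable_nat_aux a ha).congr (fun n => by push_cast; ring)

lemma hasSum_int_aux (a : ℝ) (ha : 0 < a) :
    HasSum (fun k : ℤ => a/(a^2+(k:ℝ)^2)) (π * (1 + 2/(Real.exp (2*π*a) - 1))) := by
  have hπ : (0:ℝ) < π := Real.pi_pos
  set s : ℝ := Real.exp (π*a) - Real.exp (-(π*a)) with hs
  have hEgt : 1 < Real.exp (π*a) := by
    rw [← Real.exp_zero]; exact Real.exp_lt_exp.2 (by positivity)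
  have hFlt : Real.exp (-(π*a)) < 1 := by
    rw [← Real.exp_zero]
    exact Real.exp_lt_exp.2 (by nlinarith)
  have hspos : 0 < s := by rw [hs]; linarith
  have hcont : Continuous (AddCircle.liftIco 1 0 (cg a)) :=
    AddCircle.liftIco_zero_continuous (by simpa using cg_endpoints a) (cg_cont a).continuousOn
  set P : C(AddCircle (1:ℝ), ℂ) := ⟨AddCircle.liftIco 1 0 (cg a), hcont⟩ with hP
  have hcoeff : ∀ k : ℤ, fourierCoeff (P : AddCircle (1:ℝ) → ℂ) k
      = ((s * a / (π * (a^2 + (k:ℝ)^2)) : ℝ) : ℂ) := by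
    intro k
    rw [hP, ContinuousMap.coe_mk, fourierCoeff_liftIco_eq]
    simpa only [zero_add] using cg_coeff a ha k
  have hsummR : Summable (fun k : ℤ => (s * a / (π * (a^2 + (k:ℝ)^2)) : ℝ)) := by
    have h2 := (summable_int_aux a ha).mul_left (s/π)
    apply h2.congr
    intro k
    exact div_mul_div_comm s π a _
  have hsumm : Summable (fun k : ℤ => fourierCoeff (P : AddCircle (1:ℝ) → ℂ) k) := by
    simp_rw [hcoeff]
    exact (Complex.summable_ofReal).2 hsummR
  have hpt := has_pointwise_sum_fourier_series_of_summable hsumm (0 : AddCircle (1:ℝ))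
  have hP0 : P (0 : AddCircle (1:ℝ)) = ((Real.exp (π*a) + Real.exp (-(π*a)) : ℝ) : ℂ) := by
    rw [hP, ContinuousMap.coe_mk]
    rw [show (0 : AddCircle (1:ℝ)) = (((0:ℝ) : AddCircle (1:ℝ))) by norm_num]
    rw [AddCircle.liftIco_coe_apply (by norm_num)]
    simp only [cg]
    push_cast [Complex.ofReal_exp]
    ring_nf
  rw [hP0] at hpt
  have hfour : ∀ k : ℤ, (fourier k (0 : AddCircle (1:ℝ)) : ℂ) = 1 := by
    intro k
    rw [show (0 : AddCircle (1:ℝ)) = (((0:ℝ) : AddCircle (1:ℝ))) by norm_num,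
      fourier_coe_apply]
    simp
  have hptR : HasSum (fun k : ℤ => (s * a / (π * (a^2 + (k:ℝ)^2)) : ℝ))
      (Real.exp (π*a) + Real.exp (-(π*a))) := by
    rw [← Complex.hasSum_ofReal]
    apply hpt.congr_fun
    intro k
    rw [hcoeff k, hfour k, smul_eq_mul, mul_one]
  have hmain := hptR.mul_left (π/s)
  have hfun : ∀ k : ℤ, (π/s) * (s * a / (π * (a^2 + (k:ℝ)^2))) = a/(a^2+(k:ℝ)^2) := by
    intro k
    have : a^2 + (k:ℝ)^2 ≠ 0 := by positivity
    field_simp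
  have hval : (π/s) * (Real.exp (π*a) + Real.exp (-(π*a)))
      = π * (1 + 2/(Real.exp (2*π*a) - 1)) := by
    have hE2 : Real.exp (2*π*a) = Real.exp (π*a)^2 := by
      rw [sq, ← Real.exp_add]; ring_nf
    have hEF : Real.exp (π*a) * Real.exp (-(π*a)) = 1 := by
      rw [← Real.exp_add]; simp
    have hden : Real.exp (2*π*a) - 1 ≠ 0 := by
      rw [hE2]; nlinarith
    rw [hE2]
    rw [hE2] at hden
    have hs0 : s ≠ 0 := hspos.ne'
    field_simp
    linear_combination (2*Real.exp (π*a)) * hEF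
  rw [hval] at hmain
  exact hmain.congr_fun (fun k => (hfun k).symm)

lemma hasSum_nat_side (a : ℝ) (ha : 0 < a) :
    HasSum (fun k : ℕ => a/(a^2+((k:ℝ)+1)^2))
      ((π * (1 + 2/(Real.exp (2*π*a) - 1)) - 1/a)/2) := by
  set L : ℝ := π * (1 + 2/(Real.exp (2*π*a) - 1)) with hL
  have h := (hasSum_int_aux a ha).nat_add_neg
  have h2 : HasSum (fun n : ℕ => 2*(a/(a^2+(n:ℝ)^2)))
      (L - 1/a + ∑ i ∈ Finset.range 1, 2*(a/(a^2+(i:ℝ)^2))) := by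
    convert h using 1
    · funext n; push_cast; ring
    · rw [Finset.sum_range_one]
      push_cast
      rw [sq a]
      field_simp
      rw [hL]
      ring
  have h3 := (hasSum_nat_add_iff (f := fun n : ℕ => 2*(a/(a^2+(n:ℝ)^2))) 1).2 h2
  have h4 := h3.div_const 2
  have he : (fun n : ℕ => 2 * (a / (a ^ 2 + ((n+1 : ℕ):ℝ) ^ 2)) / 2)
      = fun k : ℕ => a/(a^2+((k:ℝ)+1)^2) := by
    funext k; push_cast; ring
  rwa [he] at h4

lemma summable_one_div_shift (q : ℕ) (hq : 2 ≤ q) :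
    Summable (fun n : ℕ => 1/((n:ℝ)+1)^q) := by
  have := (summable_nat_add_iff (f := fun n : ℕ => 1/(n:ℝ)^q) 1).2
    (Real.summable_one_div_nat_pow.2 (by omega))
  exact this.congr (fun n => by push_cast; ring)

lemma hasSum_zeta_shift (k : ℕ) (hk : k ≠ 0) :
    HasSum (fun n : ℕ => 1/((n:ℝ)+1)^(2*k))
      ((-1:ℝ)^(k+1) * (2:ℝ)^(2*k-1) * π^(2*k) * ((bernoulli (2*k) : ℚ) : ℝ)/((2*k).factorial)) := by
  have h := hasSum_zeta_nat hk
  have h2 := (hasSum_nat_add_iff (f := fun n : ℕ => 1/(n:ℝ)^(2*k)) 1).2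
    (by simpa [zero_pow (by omega : 2*k ≠ 0)] using h)
  exact h2.congr (fun n => by push_cast; ring)

lemma partial_frac (x y : ℝ) (hx : x ≠ 0) (hy : y ≠ 0) (hxy : x + y ≠ 0) (M : ℕ) :
    1/(x^M*(x+y)) = (∑ j ∈ Finset.range M, (-1:ℝ)^j / (y^(j+1) * x^(M-j)))
      + (-1:ℝ)^M/(y^M*(x+y)) := by
  induction M with
  | zero => simp
  | succ M ih =>
    have key : 1/(x^(M+1)*(x+y)) = 1/(y*x^(M+1)) - (1/y)*(1/(x^M*(x+y))) := by
      field_simp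
      ring
    rw [key, ih, Finset.sum_range_succ']
    have he : ∀ j, j < M → (-1:ℝ)^(j+1) / (y^(j+2) * x^(M-j))
        = -((1/y) * ((-1:ℝ)^j / (y^(j+1) * x^(M-j)))) := by
      intro j hj
      rw [pow_succ, pow_succ]
      field_simp
    rw [mul_add, Finset.mul_sum]
    have hre : ∀ j ∈ Finset.range M, (-1:ℝ)^(j+1) / (y^(j+1+1) * x^(M+1-(j+1)))
        = -((1/y) * ((-1:ℝ)^j / (y^(j+1) * x^(M-j)))) := by
      intro j hj
      rw [Finset.mem_range] at hj
      rw [show M+1-(j+1) = M-j by omega]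
      exact he j hj
    rw [Finset.sum_congr rfl hre]
    simp only [pow_zero, Nat.sub_zero, pow_succ]
    rw [Finset.sum_neg_distrib]
    field_simp
    ring

lemma hasSum_congr' {α β : Type*} [AddCommMonoid β] [TopologicalSpace β]
    {f g : α → β} {a : β} (h : HasSum f a) (he : ∀ x, f x = g x) : HasSum g a :=
  (funext he : f = g) ▸ h

def Ev (k : ℕ) : ℝ :=
  (-1:ℝ)^(k+1) * (2:ℝ)^(2*k-1) * π^(2*k) * ((bernoulli (2*k) : ℚ) : ℝ)/((2*k).factorial)

lemma hasSum_Ev (k : ℕ) (hk : k ≠ 0) :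
    HasSum (fun n : ℕ => 1/((n:ℝ)+1)^(2*k)) (Ev k) := hasSum_zeta_shift k hk

theorem real_main (m : ℕ) (hm : 0 < m) (hodd : Odd m) :
    HasSum (fun n : ℕ => 1/((n:ℝ)+1)^(2*m+1) * (1 + 2/(Real.exp (2*π*((n:ℝ)+1)) - 1)))
      ((Ev (m+1) + ∑ j ∈ Finset.range m, (-1:ℝ)^j * (Ev (j+1) * Ev (m-j)))/π) := by
  have hπ : (0:ℝ) < π := Real.pi_pos
  set c : ℕ → ℝ := fun n => 1 + 2/(Real.exp (2*π*((n:ℝ)+1)) - 1) with hc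
  have hexp : ∀ n : ℕ, (2:ℝ) ≤ Real.exp (2*π*((n:ℝ)+1)) - 1 := by
    intro n
    have h1 : 2*π*((n:ℝ)+1) + 1 ≤ Real.exp (2*π*((n:ℝ)+1)) := by
      have := Real.add_one_le_exp (2*π*((n:ℝ)+1))
      linarith
    have h2 : (3:ℝ) ≤ 2*π*((n:ℝ)+1) := by
      have hp : (3:ℝ) ≤ 2*π := by nlinarith [Real.pi_gt_three]
      nlinarith [Nat.cast_nonneg (α := ℝ) n]
    linarith
  have hc0 : ∀ n, 0 ≤ c n ∧ c n ≤ 2 := by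
    intro n
    have h2 := hexp n
    constructor
    · have : 0 ≤ 2/(Real.exp (2*π*((n:ℝ)+1)) - 1) := by positivity
      simp only [hc]; linarith
    · have : 2/(Real.exp (2*π*((n:ℝ)+1)) - 1) ≤ 1 := by
        rw [div_le_one (by linarith)]; linarith
      simp only [hc]; linarith
  have hTs : Summable (fun n : ℕ => 1/((n:ℝ)+1)^(2*m+1) * c n) := by
    have hmaj : Summable (fun n : ℕ => 2 * (1/((n:ℝ)+1)^2)) :=
      (summable_one_div_shift 2 le_rfl).mul_left 2
    apply Summable.of_nonneg_of_le
      (fun n => mul_nonneg (by positivity) (hc0 n).1) _ hmaj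
    intro n
    have h1 : 1/((n:ℝ)+1)^(2*m+1) ≤ 1/((n:ℝ)+1)^2 := by
      apply one_div_pow_le_one_div_pow_of_le (by linarith [Nat.cast_nonneg (α := ℝ) n])
      omega
    calc 1/((n:ℝ)+1)^(2*m+1) * c n ≤ 1/((n:ℝ)+1)^2 * 2 :=
          mul_le_mul h1 (hc0 n).2 (hc0 n).1 (by positivity)
    _ = 2 * (1/((n:ℝ)+1)^2) := by ring
  set T : ℝ := ∑' n : ℕ, 1/((n:ℝ)+1)^(2*m+1) * c n with hTdef
  have hT : HasSum (fun n : ℕ => 1/((n:ℝ)+1)^(2*m+1) * c n) T := hTs.hasSum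
  -- the double-sum function
  set g : ℕ × ℕ → ℝ := fun p =>
    1/(((p.1:ℝ)+1)^(2*m) * (((p.1:ℝ)+1)^2+((p.2:ℝ)+1)^2)) with hg
  have hinner : ∀ n : ℕ, HasSum (fun k : ℕ => g (n, k))
      (1/((n:ℝ)+1)^(2*m+1) * ((π * c n - 1/((n:ℝ)+1))/2)) := by
    intro n
    have hpos : (0:ℝ) < (n:ℝ)+1 := by positivity
    have h := (hasSum_nat_side ((n:ℝ)+1) hpos).mul_left (1/((n:ℝ)+1)^(2*m+1))
    have he : ∀ k : ℕ, 1/((n:ℝ)+1)^(2*m+1) * (((n:ℝ)+1)/(((n:ℝ)+1)^2+((k:ℝ)+1)^2))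
        = g (n, k) := by
      intro k
      simp only [hg]
      have hp : ((n:ℝ)+1)^(2*m+1) = ((n:ℝ)+1)^(2*m) * ((n:ℝ)+1) := pow_succ _ _
      rw [hp]
      have h1 : (((n:ℝ)+1)^2+((k:ℝ)+1)^2) ≠ 0 := by positivity
      field_simp
    exact (funext he) ▸ h
  have hprod2 : Summable (fun p : ℕ×ℕ => (1/((p.1:ℝ)+1)^2) * (1/((p.2:ℝ)+1)^2)) :=
    (summable_one_div_shift 2 le_rfl).mul_of_nonneg (summable_one_div_shift 2 le_rfl)
      (fun n => by positivity) (fun n => by positivity)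
  have hgs : Summable g := by
    apply Summable.of_nonneg_of_le (fun p => by simp only [hg]; positivity) _ hprod2
    intro p
    simp only [hg]
    have e1 : ((p.1:ℝ)+1)^2 ≤ ((p.1:ℝ)+1)^(2*m) := by
      apply pow_le_pow_right₀ (by linarith [Nat.cast_nonneg (α := ℝ) p.1])
      omega
    have e2 : ((p.2:ℝ)+1)^2 ≤ ((p.1:ℝ)+1)^2+((p.2:ℝ)+1)^2 := by nlinarith
    have hden : ((p.1:ℝ)+1)^2 * ((p.2:ℝ)+1)^2
        ≤ ((p.1:ℝ)+1)^(2*m) * (((p.1:ℝ)+1)^2+((p.2:ℝ)+1)^2) :=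
      mul_le_mul e1 e2 (by positivity) (by positivity)
    calc 1/(((p.1:ℝ)+1)^(2*m) * (((p.1:ℝ)+1)^2+((p.2:ℝ)+1)^2))
        ≤ 1/(((p.1:ℝ)+1)^2 * ((p.2:ℝ)+1)^2) := by
          apply one_div_le_one_div_of_le (by positivity) hden
    _ = (1/((p.1:ℝ)+1)^2) * (1/((p.2:ℝ)+1)^2) := (one_div_mul_one_div _ _).symm
  set D : ℝ := ∑' p : ℕ × ℕ, g p with hDdef
  have hgD : HasSum g D := hgs.hasSum
  have hfib : HasSum (fun n : ℕ =>
      1/((n:ℝ)+1)^(2*m+1) * ((π * c n - 1/((n:ℝ)+1))/2)) D :=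
    HasSum.prod_fiberwise hgD hinner
  have hZ := hasSum_Ev (m+1) (by omega)
  -- π T - Ev (m+1) = 2 D
  have hstep1 : π * T - Ev (m+1) = 2 * D := by
    have hA : HasSum (fun n : ℕ => π * (1/((n:ℝ)+1)^(2*m+1) * c n) - 1/((n:ℝ)+1)^(2*(m+1)))
        (π * T - Ev (m+1)) := (hT.mul_left π).sub hZ
    have hB := hfib.mul_left 2
    apply hA.unique
    apply hasSum_congr' hB
    intro n
    have hpos : ((n:ℝ)+1) ≠ 0 := by positivity
    have hp : ((n:ℝ)+1)^(2*(m+1)) = ((n:ℝ)+1)^(2*m+1) * ((n:ℝ)+1) := by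
      rw [← pow_succ]; ring_nf
    rw [hp]
    field_simp
  -- evaluate D by partial fractions and symmetry
  have hswap : HasSum (fun p : ℕ × ℕ =>
      1/(((p.2:ℝ)+1)^(2*m) * (((p.2:ℝ)+1)^2+((p.1:ℝ)+1)^2))) D := by
    have h := ((Equiv.prodComm ℕ ℕ).hasSum_iff (f := g)).2 hgD
    apply hasSum_congr' h
    intro p
    simp [hg, Equiv.prodComm]
  have hterm : ∀ j ∈ Finset.range m, HasSum (fun p : ℕ × ℕ =>
      (-1:ℝ)^j * ((1/((p.1:ℝ)+1)^(2*(m-j))) * (1/((p.2:ℝ)+1)^(2*(j+1)))))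
      ((-1:ℝ)^j * (Ev (m-j) * Ev (j+1))) := by
    intro j hj
    rw [Finset.mem_range] at hj
    apply HasSum.mul_left
    apply HasSum.mul (hasSum_Ev (m-j) (by omega)) (hasSum_Ev (j+1) (by omega))
    apply (summable_one_div_shift (2*(m-j)) (by omega)).mul_of_nonneg
      (summable_one_div_shift (2*(j+1)) (by omega))
      (fun n => by positivity) (fun n => by positivity)
  have hsum1 : HasSum (fun p : ℕ × ℕ => ∑ j ∈ Finset.range m,
      (-1:ℝ)^j * ((1/((p.1:ℝ)+1)^(2*(m-j))) * (1/((p.2:ℝ)+1)^(2*(j+1)))))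
      (∑ j ∈ Finset.range m, (-1:ℝ)^j * (Ev (m-j) * Ev (j+1))) := hasSum_sum hterm
  have hswap2 := hswap.mul_left ((-1:ℝ)^m)
  have htot := hsum1.add hswap2
  have hgeq : (fun p : ℕ × ℕ => (∑ j ∈ Finset.range m,
      (-1:ℝ)^j * ((1/((p.1:ℝ)+1)^(2*(m-j))) * (1/((p.2:ℝ)+1)^(2*(j+1)))))
      + (-1:ℝ)^m * (1/(((p.2:ℝ)+1)^(2*m) * (((p.2:ℝ)+1)^2+((p.1:ℝ)+1)^2)))) = g := by
    funext p
    simp only [hg]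
    have hx : (0:ℝ) < ((p.1:ℝ)+1)^2 := by positivity
    have hy : (0:ℝ) < ((p.2:ℝ)+1)^2 := by positivity
    have hpf := partial_frac (((p.1:ℝ)+1)^2) (((p.2:ℝ)+1)^2) hx.ne' hy.ne'
      (by positivity) m
    simp only [← pow_mul] at hpf
    rw [hpf]
    congr 1
    · apply Finset.sum_congr rfl
      intro j hj
      rw [one_div_mul_one_div, mul_one_div,
        mul_comm (((p.1:ℝ)+1)^(2*(m-j))) (((p.2:ℝ)+1)^(2*(j+1)))]
    · rw [mul_one_div]
      ring_nf
  have hgtot : HasSum g (∑ j ∈ Finset.range m, (-1:ℝ)^j * (Ev (m-j) * Ev (j+1))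
      + (-1:ℝ)^m * D) := hgeq ▸ htot
  have hDval := hgD.unique hgtot
  have hm1 : (-1:ℝ)^m = -1 := Odd.neg_one_pow hodd
  rw [hm1] at hDval
  have h2D : 2 * D = ∑ j ∈ Finset.range m, (-1:ℝ)^j * (Ev (m-j) * Ev (j+1)) := by
    linarith
  -- conclude
  have hTval : T = (Ev (m+1) + ∑ j ∈ Finset.range m, (-1:ℝ)^j * (Ev (j+1) * Ev (m-j)))/π := by
    rw [eq_div_iff hπ.ne']
    have : ∑ j ∈ Finset.range m, (-1:ℝ)^j * (Ev (j+1) * Ev (m-j))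
        = ∑ j ∈ Finset.range m, (-1:ℝ)^j * (Ev (m-j) * Ev (j+1)) := by
      apply Finset.sum_congr rfl; intro j _; ring
    rw [this, ← h2D]
    linarith [hstep1]
  rw [← hTval]
  exact hT

lemma Ev_identity (m : ℕ) (hm : 0 < m) (hodd : Odd m) :
    (Ev (m+1) + ∑ j ∈ Finset.range m, (-1:ℝ)^j * (Ev (j+1) * Ev (m-j)))/π
    = π^(2*m+1) * 2^(2*m) * ∑ j ∈ Finset.range (m+2),
        (-1:ℝ)^(j+1) * ((bernoulli (2*j) : ℚ) : ℝ) * ((bernoulli (2*m+2-2*j) : ℚ) : ℝ)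
          / ((Nat.factorial (2*j)) * (Nat.factorial (2*m+2-2*j))) := by
  have hπ : (0:ℝ) < π := Real.pi_pos
  rw [div_eq_iff hπ.ne']
  set f : ℕ → ℝ := fun j => (-1:ℝ)^(j+1) * ((bernoulli (2*j) : ℚ) : ℝ)
      * ((bernoulli (2*m+2-2*j) : ℚ) : ℝ)
      / ((Nat.factorial (2*j)) * (Nat.factorial (2*m+2-2*j))) with hf
  have hsplit : ∑ j ∈ Finset.range (m+2), f j
      = (∑ j ∈ Finset.range m, f (j+1)) + f (m+1) + f 0 := by
    rw [Finset.sum_range_succ' f (m+1), Finset.sum_range_succ (fun j => f (j+1)) m]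
  have hm1 : (-1:ℝ)^m = -1 := Odd.neg_one_pow hodd
  have hB0 : ((bernoulli 0 : ℚ) : ℝ) = 1 := by rw [bernoulli_zero]; norm_num
  -- boundary terms
  have hf0 : f 0 = -(((bernoulli (2*m+2) : ℚ) : ℝ))/((2*m+2).factorial) := by
    simp only [hf]
    norm_num [hB0]
  have hfm1 : f (m+1) = -(((bernoulli (2*m+2) : ℚ) : ℝ))/((2*m+2).factorial) := by
    simp only [hf]
    rw [show 2*m+2-2*(m+1) = 0 by omega, show 2*(m+1) = 2*m+2 by ring]
    rw [show (m+1)+1 = m+2 by ring, pow_add, hm1]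
    norm_num [hB0]
  have hbdry : Ev (m+1) = π^(2*m+1) * 2^(2*m) * (f (m+1) + f 0) * π := by
    rw [hf0, hfm1, Ev]
    rw [show 2*(m+1)-1 = 2*m+1 by omega, show 2*(m+1) = 2*m+2 by ring,
      show (m+1)+1 = m+2 by ring, pow_add, hm1]
    have : ((2*m+2).factorial : ℝ) ≠ 0 := by positivity
    field_simp
    ring
  -- interior terms
  have hint : ∀ j ∈ Finset.range m,
      (-1:ℝ)^j * (Ev (j+1) * Ev (m-j)) = π^(2*m+1) * 2^(2*m) * f (j+1) * π := by
    intro j hj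
    rw [Finset.mem_range] at hj
    obtain ⟨d, hd⟩ : ∃ d, m = j + 1 + d := ⟨m - (j+1), by omega⟩
    subst hd
    have hpar : Even (j + d) := by
      rcases hodd with ⟨c, hc⟩
      exact ⟨c, by omega⟩
    rw [show j + 1 + d - j = d + 1 by omega]
    simp only [hf, Ev]
    rw [show 2*(j+1+d)+2-2*(j+1) = 2*(d+1) by omega]
    rw [show 2*(j+1)-1 = 2*j+1 by omega, show 2*(d+1)-1 = 2*d+1 by omega]
    have hfac1 : ((2*(j+1)).factorial : ℝ) ≠ 0 := by positivity
    have hfac2 : ((2*(d+1)).factorial : ℝ) ≠ 0 := by positivity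
    rcases Nat.even_or_odd j with hje | hjo
    · have hde : Even d := by
        rcases hje with ⟨c1, hc1⟩; rcases hpar with ⟨c2, hc2⟩; exact ⟨c2 - c1, by omega⟩
      rw [Even.neg_one_pow hje,
        Even.neg_one_pow (by rcases hje with ⟨c,hc⟩; exact ⟨c+1, by omega⟩ : Even (j+2)),
        Even.neg_one_pow (by rcases hde with ⟨c,hc⟩; exact ⟨c+1, by omega⟩ : Even (d+2))]
      field_simp
      ring
    · have hdo : Odd d := by
        rcases hjo with ⟨c1, hc1⟩; rcases hpar with ⟨c2, hc2⟩; exact ⟨c2 - c1 - 1, by omega⟩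
      rw [Odd.neg_one_pow hjo,
        Odd.neg_one_pow (by rcases hjo with ⟨c,hc⟩; exact ⟨c+1, by omega⟩ : Odd (j+2)),
        Odd.neg_one_pow (by rcases hdo with ⟨c,hc⟩; exact ⟨c+1, by omega⟩ : Odd (d+2))]
      field_simp
      ring
  calc Ev (m+1) + ∑ j ∈ Finset.range m, (-1:ℝ)^j * (Ev (j+1) * Ev (m-j))
      = π^(2*m+1)*2^(2*m)*(f (m+1) + f 0)*π
        + ∑ j ∈ Finset.range m, π^(2*m+1)*2^(2*m)*f (j+1)*π := by
        rw [hbdry, Finset.sum_congr rfl hint]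
  _ = π^(2*m+1)*2^(2*m)*(f (m+1) + f 0)*π
        + π^(2*m+1)*2^(2*m)*(∑ j ∈ Finset.range m, f (j+1))*π := by
        rw [← Finset.sum_mul, ← Finset.mul_sum]
  _ = π^(2*m+1) * 2^(2*m) * (∑ j ∈ Finset.range (m+2), f j) * π := by
        rw [hsplit]; ring

end Lerch
end

open Lerch in
theorem lerch_formula (m : ℕ) (hm : 0 < m) (hodd : Odd m) :
    riemannZeta (2 * m + 1) +
      2 * ∑' n : ℕ, ((n : ℂ) + 1) ^ (-(2 * (m : ℤ)) - 1) /
        (Complex.exp (2 * π * ((n : ℂ) + 1)) - 1) =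
    (π : ℂ) ^ (2 * m + 1) * 2 ^ (2 * m) * ∑ j ∈ Finset.range (m + 2),
      (-1) ^ (j + 1) * ((bernoulli (2 * j) : ℚ) : ℂ) *
        ((bernoulli (2 * m + 2 - 2 * j) : ℚ) : ℂ) /
        ((Nat.factorial (2 * j)) * (Nat.factorial (2 * m + 2 - 2 * j))) := by
  have hπ : (0:ℝ) < π := Real.pi_pos
  set A : ℕ → ℝ := fun n => 1/((n:ℝ)+1)^(2*m+1) with hA
  set B : ℕ → ℝ := fun n => A n / (Real.exp (2*π*((n:ℝ)+1)) - 1) with hB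
  have hexp : ∀ n : ℕ, (2:ℝ) ≤ Real.exp (2*π*((n:ℝ)+1)) - 1 := by
    intro n
    have h1 := Real.add_one_le_exp (2*π*((n:ℝ)+1))
    have h2 : (3:ℝ) ≤ 2*π*((n:ℝ)+1) := by
      have hp : (3:ℝ) ≤ 2*π := by nlinarith [Real.pi_gt_three]
      nlinarith [Nat.cast_nonneg (α := ℝ) n]
    linarith
  have hAs : Summable A := summable_one_div_shift (2*m+1) (by omega)
  have hBs : Summable B := by
    apply Summable.of_nonneg_of_le _ _ hAs
    · intro n
      have := hexp n
      simp only [hB, hA]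
      positivity
    · intro n
      have h2 := hexp n
      simp only [hB]
      exact div_le_self (by simp only [hA]; positivity) (by linarith)
  have hR := real_main m hm hodd
  have hsplit : HasSum (fun n => A n * (1 + 2/(Real.exp (2*π*((n:ℝ)+1)) - 1)))
      ((∑' n, A n) + 2 * ∑' n, B n) := by
    apply hasSum_congr' (hAs.hasSum.add ((hBs.hasSum).mul_left 2))
    intro n
    simp only [hB]
    ring
  have hTeq : (∑' n, A n) + 2 * ∑' n, B n
      = (Ev (m+1) + ∑ j ∈ Finset.range m, (-1:ℝ)^j * (Ev (j+1) * Ev (m-j)))/π :=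
    hsplit.unique hR
  -- identify the complex LHS
  have hzeta : riemannZeta (2 * (m:ℂ) + 1) = ((∑' n, A n : ℝ) : ℂ) := by
    rw [zeta_eq_tsum_one_div_nat_add_one_cpow
      (by simp; positivity)]
    rw [Complex.ofReal_tsum]
    apply tsum_congr
    intro n
    have harg : (2 * (m:ℂ) + 1) = ((2*m+1 : ℕ) : ℂ) := by push_cast; ring
    rw [harg, Complex.cpow_natCast]
    simp only [hA]
    push_cast
    norm_num
  have hexpsum : (∑' n : ℕ, ((n : ℂ) + 1) ^ (-(2 * (m : ℤ)) - 1) /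
        (Complex.exp (2 * (π:ℂ) * ((n : ℂ) + 1)) - 1)) = ((∑' n, B n : ℝ) : ℂ) := by
    rw [Complex.ofReal_tsum]
    apply tsum_congr
    intro n
    have hzp : ((n : ℂ) + 1) ^ (-(2 * (m : ℤ)) - 1)
        = (((n:ℂ)+1)^(2*m+1 : ℕ))⁻¹ := by
      rw [show (-(2 * (m : ℤ)) - 1) = -((2*m+1 : ℕ) : ℤ) by push_cast; ring]
      rw [zpow_neg, zpow_natCast]
    have hce : Complex.exp (2 * (π:ℂ) * ((n : ℂ) + 1))
        = ((Real.exp (2*π*((n:ℝ)+1)) : ℝ) : ℂ) := by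
      rw [Complex.ofReal_exp]
      congr 1
      push_cast
      ring
    rw [hzp, hce]
    simp only [hB, hA]
    push_cast
    ring
  rw [hzeta, hexpsum, ← Complex.ofReal_ofNat, ← Complex.ofReal_mul, ← Complex.ofReal_add]
  rw [hTeq, Ev_identity m hm hodd]
  push_cast
  ring
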